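/- arXiv:2010.07236 — 2 statements merged into one kernel-verified Lean document; each statement's English description precedes it below -/
import Mathlib

section
/- Fix real numbers a, b ∈ [0,1] with a < b, and set p := 1/a, q := 1/b (with 1/0 := ∞). Suppose (S_θ)_{θ≥1} is a family of linear operators S_θ : ℓ^p(ℕ) → ℓ^q(ℕ) such that ‖S_θ x‖_{ℓ^q} ≤ A θ^{b−a} ‖x‖_{ℓ^p} for all x ∈ ℓ^p and θ ≥ 1, for some constant A > 0. Then there is no constant B > 0 such that ‖x − S_θ x‖_{ℓ^p} ≤ B θ^{−(b−a)} ‖x‖_{ℓ^q} for all x ∈ ℓ^q and all θ ≥ 1. In other words, the scale of ℓ^p spaces does not admit any family of smoothing operators. -/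
/- STATEMENT 9: The scale of `ℓ^p` spaces does not admit smoothing operators.
The space `ℓ^{1/e}` (for `e ∈ [0,1]`, with `1/0 := ∞`) is described by the
membership predicate `seqMem e` and the norm `seqNorm e`. -/

open scoped BigOperators

noncomputable section

/-- The `ℓ^{1/e}` norm of a sequence, `e ∈ [0,1]` (`e = 0` gives `ℓ^∞`). -/
def seqNorm (e : ℝ) (x : ℕ → ℂ) : ℝ :=
  if e = 0 then ⨆ k, ‖x k‖ else (∑' k, ‖x k‖ ^ (1 / e)) ^ e

/-- Membership in `ℓ^{1/e}`. -/
def seqMem (e : ℝ) (x : ℕ → ℂ) : Prop :=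
  if e = 0 then BddAbove (Set.range fun k => ‖x k‖)
  else Summable fun k => ‖x k‖ ^ (1 / e)

open scoped ENNReal

lemma seqMem_of_finsupp {e : ℝ} (he0 : 0 ≤ e) (x : ℕ → ℂ) (T : Finset ℕ)
    (hx : ∀ k, k ∉ T → x k = 0) : seqMem e x := by
  unfold seqMem
  split_ifs with h
  · refine BddAbove.mono (Set.range_subset_iff.2 fun k => ?_)
      ((T.image fun k => ‖x k‖) ∪ {0} : Finset ℝ).finite_toSet.bddAbove
    by_cases hk : k ∈ T
    · exact Finset.mem_coe.2 (Finset.mem_union_left _ (Finset.mem_image_of_mem _ hk))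
    · simp [hx k hk]
  · have he : 0 < e := lt_of_le_of_ne he0 (Ne.symm h)
    refine summable_of_ne_finset_zero (s := T) fun k hk => ?_
    rw [hx k hk, norm_zero, Real.zero_rpow (by positivity)]

lemma seqNorm_indicator {e : ℝ} (he0 : 0 ≤ e) (x : ℕ → ℂ) (T : Finset ℕ)
    (hT : T.Nonempty) (hx : ∀ k, ‖x k‖ = if k ∈ T then 1 else 0) :
    seqNorm e x = (T.card : ℝ) ^ e := by
  unfold seqNorm
  split_ifs with h
  · rw [h, Real.rpow_zero]
    apply le_antisymm
    · refine ciSup_le fun k => ?_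
      rw [hx k]; split_ifs <;> norm_num
    · obtain ⟨k, hk⟩ := hT
      have hb : BddAbove (Set.range fun k => ‖x k‖) := by
        refine ⟨1, ?_⟩
        rintro v ⟨k, rfl⟩
        simp only [hx k]; split_ifs <;> norm_num
      have := le_ciSup hb k
      rwa [hx k, if_pos hk] at this
  · have he : 0 < e := lt_of_le_of_ne he0 (Ne.symm h)
    have hr : (0:ℝ) < 1 / e := by positivity
    have h0 : ∀ k ∉ T, ‖x k‖ ^ (1/e) = 0 := by
      intro k hk
      rw [hx k, if_neg hk, Real.zero_rpow hr.ne']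
    rw [tsum_eq_sum h0]
    congr 1
    rw [Finset.sum_congr rfl fun k hk => by rw [hx k, if_pos hk, Real.one_rpow]]
    simp

lemma coord_le_seqNorm {e : ℝ} (he0 : 0 ≤ e) (x : ℕ → ℂ)
    (hx : seqMem e x) (k : ℕ) : ‖x k‖ ≤ seqNorm e x := by
  unfold seqMem at hx
  unfold seqNorm
  split_ifs with h
  · rw [h, if_pos rfl] at hx
    exact le_ciSup hx k
  · rw [if_neg h] at hx
    have he : 0 < e := lt_of_le_of_ne he0 (Ne.symm h)
    have h1 : ‖x k‖ ^ (1/e) ≤ ∑' k, ‖x k‖ ^ (1/e) :=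
      hx.le_tsum k fun _ _ => Real.rpow_nonneg (norm_nonneg _) _
    calc ‖x k‖ = (‖x k‖ ^ (1/e)) ^ e := by
          rw [← Real.rpow_mul (norm_nonneg _), one_div_mul_cancel h, Real.rpow_one]
      _ ≤ (∑' k, ‖x k‖ ^ (1/e)) ^ e :=
          Real.rpow_le_rpow (Real.rpow_nonneg (norm_nonneg _) _) h1 he0

lemma sum_rpow_le_seqNorm {e : ℝ} (he : 0 < e) (x : ℕ → ℂ) (hx : seqMem e x)
    (s : Finset ℕ) : (∑ k ∈ s, ‖x k‖ ^ (1/e)) ^ e ≤ seqNorm e x := by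
  unfold seqMem at hx
  rw [if_neg he.ne'] at hx
  unfold seqNorm
  rw [if_neg he.ne']
  exact Real.rpow_le_rpow (Finset.sum_nonneg fun k _ => Real.rpow_nonneg (norm_nonneg _) _)
    (hx.sum_le_tsum s (fun k _ => Real.rpow_nonneg (norm_nonneg _) _)) he.le

lemma seqMem_sub {e : ℝ} (he0 : 0 ≤ e) {x y : ℕ → ℂ}
    (hx : seqMem e x) (hy : seqMem e y) : seqMem e (x - y) := by
  unfold seqMem at *
  split_ifs with h
  · rw [if_pos h] at hx hy
    obtain ⟨Cx, hCx⟩ := hx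
    obtain ⟨Cy, hCy⟩ := hy
    refine ⟨Cx + Cy, ?_⟩
    rintro v ⟨k, rfl⟩
    have h1 : ‖x k‖ ≤ Cx := hCx ⟨k, rfl⟩
    have h2 : ‖y k‖ ≤ Cy := hCy ⟨k, rfl⟩
    calc ‖(x - y) k‖ ≤ ‖x k‖ + ‖y k‖ := norm_sub_le _ _
      _ ≤ Cx + Cy := add_le_add h1 h2
  · rw [if_neg h] at hx hy
    have he : 0 < e := lt_of_le_of_ne he0 (Ne.symm h)
    have hr : (0:ℝ) ≤ 1 / e := by positivity
    refine Summable.of_nonneg_of_le (fun k => Real.rpow_nonneg (norm_nonneg _) _)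
      (fun k => ?_) (((hx.add hy).mul_left ((2:ℝ) ^ (1/e))))
    have key : ‖(x - y) k‖ ≤ 2 * max ‖x k‖ ‖y k‖ := by
      calc ‖(x - y) k‖ ≤ ‖x k‖ + ‖y k‖ := norm_sub_le _ _
        _ ≤ max ‖x k‖ ‖y k‖ + max ‖x k‖ ‖y k‖ :=
            add_le_add (le_max_left _ _) (le_max_right _ _)
        _ = 2 * max ‖x k‖ ‖y k‖ := by ring
    calc ‖(x - y) k‖ ^ (1/e) ≤ (2 * max ‖x k‖ ‖y k‖) ^ (1/e) :=
          Real.rpow_le_rpow (norm_nonneg _) key hr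
      _ = 2 ^ (1/e) * (max ‖x k‖ ‖y k‖) ^ (1/e) :=
          Real.mul_rpow (by norm_num) (le_max_of_le_left (norm_nonneg _))
      _ ≤ 2 ^ (1/e) * (‖x k‖ ^ (1/e) + ‖y k‖ ^ (1/e)) := by
          refine mul_le_mul_of_nonneg_left ?_ (by positivity)
          rcases le_total ‖x k‖ ‖y k‖ with hc | hc
          · rw [max_eq_right hc]
            exact le_add_of_nonneg_left (Real.rpow_nonneg (norm_nonneg _) _)
          · rw [max_eq_left hc]
            exact le_add_of_nonneg_right (Real.rpow_nonneg (norm_nonneg _) _)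

lemma seqMem_mono {a b : ℝ} (ha : 0 ≤ a) (hab : a ≤ b) (hb0 : 0 < b) {x : ℕ → ℂ}
    (hx : seqMem b x) : seqMem a x := by
  have hxb : Summable fun k => ‖x k‖ ^ (1/b) := by
    unfold seqMem at hx; rwa [if_neg hb0.ne'] at hx
  unfold seqMem
  split_ifs with h
  · refine ⟨(∑' k, ‖x k‖ ^ (1/b)) ^ b, ?_⟩
    rintro v ⟨k, rfl⟩
    have h1 := coord_le_seqNorm hb0.le x hx k
    unfold seqNorm at h1
    rwa [if_neg hb0.ne'] at h1
  · have ha0 : 0 < a := lt_of_le_of_ne ha (Ne.symm h)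
    have hev : ∀ᶠ k in Filter.cofinite, ‖x k‖ ^ (1/a) ≤ ‖x k‖ ^ (1/b) := by
      filter_upwards [hxb.tendsto_cofinite_zero.eventually_le_const
        (by norm_num : (0:ℝ) < 1)] with k hk
      rcases eq_or_lt_of_le (norm_nonneg (x k)) with h0 | h0
      · rw [← h0, Real.zero_rpow (by positivity), Real.zero_rpow (by positivity)]
      · have hle1 : ‖x k‖ ≤ 1 := by
          have h2 := Real.rpow_le_rpow (Real.rpow_nonneg (norm_nonneg _) _) hk hb0.le
          rwa [← Real.rpow_mul (norm_nonneg _), one_div_mul_cancel hb0.ne',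
            Real.rpow_one, Real.one_rpow] at h2
        exact Real.rpow_le_rpow_of_exponent_ge h0 hle1 (one_div_le_one_div_of_le ha0 hab)
    refine Summable.of_norm_bounded_eventually hxb ?_
    filter_upwards [hev] with k hk
    rwa [Real.norm_of_nonneg (Real.rpow_nonneg (norm_nonneg _) _)]

def sg {N : ℕ} (ε : Fin N → Bool) (k : ℕ) : ℂ :=
  if h : k < N then (if ε ⟨k, h⟩ then 1 else -1) else 0

lemma sg_norm {N : ℕ} (ε : Fin N → Bool) (k : ℕ) :
    ‖sg ε k‖ = if k < N then 1 else 0 := by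
  unfold sg
  split_ifs <;> simp

lemma sg_orth {N : ℕ} {i n : ℕ} (hi : i < N) (hn : n < N) :
    ∑ ε : Fin N → Bool, sg ε i * sg ε n = if i = n then (2:ℂ)^N else 0 := by
  split_ifs with h
  · subst h
    have hsq : ∀ ε : Fin N → Bool, sg ε i * sg ε i = 1 := by
      intro ε; unfold sg; rw [dif_pos hi]; split_ifs <;> ring
    rw [Finset.sum_congr rfl fun ε _ => hsq ε, Finset.sum_const, Finset.card_univ,
      Fintype.card_fun, Fintype.card_bool, Fintype.card_fin]
    simp
  · refine Finset.sum_ninvolution (fun ε => Function.update ε ⟨i, hi⟩ (!(ε ⟨i, hi⟩)))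
      ?_ ?_ (fun _ => Finset.mem_univ _) ?_
    · intro ε
      have h1 : sg (Function.update ε ⟨i,hi⟩ (!(ε ⟨i,hi⟩))) i = -(sg ε i) := by
        unfold sg
        rw [dif_pos hi, dif_pos hi, Function.update_self]
        cases ε ⟨i,hi⟩ <;> simp
      have h2 : sg (Function.update ε ⟨i,hi⟩ (!(ε ⟨i,hi⟩))) n = sg ε n := by
        unfold sg
        rw [dif_pos hn, dif_pos hn,
          Function.update_of_ne (by simpa [Fin.ext_iff] using Ne.symm h)]
      rw [h1, h2]; ring
    · intro ε _ heq
      have := congrFun heq ⟨i, hi⟩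
      simp at this
    · intro ε
      simp [Function.update_idem, Bool.not_not]

def unitv (n : ℕ) : ℕ → ℂ := fun k => if k = n then 1 else 0

lemma unitv_norm (n k : ℕ) : ‖unitv n k‖ = if k ∈ ({n} : Finset ℕ) then 1 else 0 := by
  unfold unitv
  simp only [Finset.mem_singleton]
  split_ifs <;> simp

lemma sg_decomp {N : ℕ} (ε : Fin N → Bool) :
    sg ε = ∑ n ∈ Finset.range N, sg ε n • unitv n := by
  funext k
  have h : (∑ n ∈ Finset.range N, sg ε n • unitv n) k
      = if k ∈ Finset.range N then sg ε k else 0 := by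
    simp only [Finset.sum_apply, Pi.smul_apply, unitv, smul_eq_mul, mul_ite, mul_one, mul_zero]
    exact Finset.sum_ite_eq _ k _
  rw [h]
  split_ifs with hk
  · rfl
  · unfold sg
    rw [dif_neg (by simpa using hk)]

theorem lp_scale_admits_no_smoothing
    (a b : ℝ) (ha : 0 ≤ a) (hab : a < b) (hb : b ≤ 1)
    (S : ℝ → (ℕ → ℂ) →ₗ[ℂ] (ℕ → ℂ)) (A : ℝ) (hA : 0 < A)
    -- each `S θ` maps `ℓ^p` (p = 1/a) into `ℓ^q` (q = 1/b) …
    (hmap : ∀ θ : ℝ, 1 ≤ θ → ∀ x, seqMem a x → seqMem b (S θ x))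
    -- … with the bound `‖S_θ x‖_{ℓ^q} ≤ A θ^{b−a} ‖x‖_{ℓ^p}`
    (hS1 : ∀ θ : ℝ, 1 ≤ θ → ∀ x, seqMem a x →
      seqNorm b (S θ x) ≤ A * θ ^ (b - a) * seqNorm a x) :
    -- then no constant `B > 0` realizes the second smoothing inequality
    ¬ ∃ B : ℝ, 0 < B ∧ ∀ θ : ℝ, 1 ≤ θ → ∀ x, seqMem b x →
        seqNorm a (x - S θ x) ≤ B * θ ^ (-(b - a)) * seqNorm b x := by
  rintro ⟨B, hB, hB2⟩
  have hb0 : 0 < b := lt_of_le_of_lt ha hab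
  have hba : 0 < b - a := sub_pos.2 hab
  set θ : ℝ := max 1 ((2*B) ^ (1/(b-a))) with hθdef
  have hθ1 : (1:ℝ) ≤ θ := le_max_left _ _
  have hθ0 : 0 < θ := lt_of_lt_of_le one_pos hθ1
  have hθb : 0 < θ ^ (b-a) := Real.rpow_pos_of_pos hθ0 _
  have hθpow : 2*B ≤ θ ^ (b-a) := by
    have h1 : (2*B) ^ (1/(b-a)) ≤ θ := le_max_right _ _
    have h2 : ((2*B) ^ (1/(b-a))) ^ (b-a) ≤ θ ^ (b-a) :=
      Real.rpow_le_rpow (Real.rpow_nonneg (by positivity) _) h1 hba.le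
    rwa [← Real.rpow_mul (by positivity), one_div_mul_cancel hba.ne', Real.rpow_one] at h2
  -- the diagonal entries
  set c : ℕ → ℂ := fun n => S θ (unitv n) n with hcdef
  -- each diagonal entry is at least 1/2 in absolute value
  have hmemUa : ∀ n, seqMem a (unitv n) := fun n =>
    seqMem_of_finsupp ha _ {n} (by intro k hk; simpa [unitv] using hk)
  have hmemUb : ∀ n, seqMem b (unitv n) := fun n =>
    seqMem_of_finsupp hb0.le _ {n} (by intro k hk; simpa [unitv] using hk)
  have hnormUb : ∀ n, seqNorm b (unitv n) = 1 := by
    intro n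
    have := seqNorm_indicator hb0.le (unitv n) {n} (Finset.singleton_nonempty n) (unitv_norm n)
    simpa using this
  have hcoord : ∀ n, (1:ℝ)/2 ≤ ‖c n‖ := by
    intro n
    have hSU : seqMem b (S θ (unitv n)) := hmap θ hθ1 _ (hmemUa n)
    have hdiff : seqMem a (unitv n - S θ (unitv n)) :=
      seqMem_mono ha hab.le hb0 (seqMem_sub hb0.le (hmemUb n) hSU)
    have hest := hB2 θ hθ1 _ (hmemUb n)
    rw [hnormUb n, mul_one] at hest
    have hhalf : B * θ ^ (-(b-a)) ≤ 1/2 := by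
      rw [Real.rpow_neg hθ0.le, ← div_eq_mul_inv, div_le_iff₀ hθb]
      nlinarith
    have h1 : ‖(unitv n - S θ (unitv n)) n‖ ≤ 1/2 :=
      le_trans (coord_le_seqNorm ha _ hdiff n) (le_trans hest hhalf)
    have h2 : (unitv n - S θ (unitv n)) n = 1 - c n := by
      simp [unitv, hcdef]
    rw [h2] at h1
    have h3 : ‖(1:ℂ)‖ - ‖c n‖ ≤ ‖1 - c n‖ := norm_sub_norm_le _ _
    rw [norm_one] at h3
    linarith
  -- the key estimate for every N ≥ 1
  have hkeyN : ∀ N : ℕ, 1 ≤ N → (1/2 : ℝ) * (N:ℝ) ^ b ≤ A * θ ^ (b-a) * (N:ℝ) ^ a := by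
    intro N hN
    set P : ℝ≥0∞ := ENNReal.ofReal (1/b) with hPdef
    have hPto : P.toReal = 1/b := ENNReal.toReal_ofReal (by positivity)
    haveI hfact : Fact ((1:ℝ≥0∞) ≤ P) := ⟨by
      rw [hPdef, show (1:ℝ≥0∞) = ENNReal.ofReal 1 by simp]
      exact ENNReal.ofReal_le_ofReal (by rw [le_div_iff₀ hb0]; linarith)⟩
    have hPpos : 0 < P.toReal := by rw [hPto]; positivity
    set d : PiLp P (fun _ : Fin N => ℂ) := WithLp.toLp P (fun i => c i) with hddef
    set u : (Fin N → Bool) → PiLp P (fun _ : Fin N => ℂ) :=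
      fun ε => WithLp.toLp P (fun i => sg ε (i:ℕ) * (S θ (sg ε)) (i:ℕ)) with hudef
    have hrangeN : (Finset.range N).Nonempty := ⟨0, Finset.mem_range.2 hN⟩
    have hsgnorm : ∀ ε : Fin N → Bool, ∀ k, ‖sg ε k‖ = if k ∈ Finset.range N then 1 else 0 := by
      intro ε k; rw [sg_norm]; simp [Finset.mem_range]
    have hmemsg : ∀ ε : Fin N → Bool, seqMem a (sg ε) := by
      intro ε
      refine seqMem_of_finsupp ha _ (Finset.range N) fun k hk => ?_
      unfold sg; rw [dif_neg (by simpa using hk)]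
    have hnormsg : ∀ ε : Fin N → Bool, seqNorm a (sg ε) = (N:ℝ) ^ a := by
      intro ε
      have := seqNorm_indicator ha (sg ε) (Finset.range N) hrangeN (hsgnorm ε)
      simpa using this
    have hsum_apply : ∀ (s : Finset (Fin N → Bool)) (i : Fin N),
        (∑ ε ∈ s, u ε) i = ∑ ε ∈ s, u ε i := by
      intro s i
      induction s using Finset.cons_induction with
      | empty => rfl
      | cons e s he ih => rw [Finset.sum_cons, Finset.sum_cons, PiLp.add_apply, ih]
    have hkey : ∀ i : Fin N,
        ∑ ε : Fin N → Bool, sg ε (i:ℕ) * (S θ (sg ε)) (i:ℕ) = (2:ℂ)^N * c (i:ℕ) := by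
      intro i
      have hpt : ∀ ε : Fin N → Bool, (S θ (sg ε)) (i:ℕ)
          = ∑ n ∈ Finset.range N, sg ε n * (S θ (unitv n)) (i:ℕ) := by
        intro ε
        conv_lhs => rw [sg_decomp ε]
        rw [map_sum]
        simp only [map_smul]
        simp [Finset.sum_apply]
      calc ∑ ε : Fin N → Bool, sg ε (i:ℕ) * (S θ (sg ε)) (i:ℕ)
          = ∑ ε : Fin N → Bool, ∑ n ∈ Finset.range N,
              (sg ε (i:ℕ) * sg ε n) * (S θ (unitv n)) (i:ℕ) := by
            refine Finset.sum_congr rfl fun ε _ => ?_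
            rw [hpt ε, Finset.mul_sum]
            exact Finset.sum_congr rfl fun n _ => by ring
        _ = ∑ n ∈ Finset.range N, (∑ ε : Fin N → Bool, sg ε (i:ℕ) * sg ε n)
              * (S θ (unitv n)) (i:ℕ) := by
            rw [Finset.sum_comm]
            exact Finset.sum_congr rfl fun n _ => (Finset.sum_mul _ _ _).symm
        _ = (2:ℂ)^N * c (i:ℕ) := by
            rw [Finset.sum_congr rfl fun n hn => by
              rw [sg_orth i.isLt (Finset.mem_range.1 hn)]]
            simp only [ite_mul, zero_mul, Finset.sum_ite_eq, Finset.mem_range, i.isLt, if_true]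
            rfl
    have hlow : (1/2:ℝ) * (N:ℝ)^b ≤ ‖d‖ := by
      rw [PiLp.norm_eq_sum hPpos, hPto, one_div_one_div]
      have h1 : (N:ℝ) * (1/2:ℝ)^(1/b) ≤ ∑ i : Fin N, ‖d i‖ ^ (1/b) := by
        calc (N:ℝ) * (1/2:ℝ)^(1/b) = ∑ _i : Fin N, (1/2:ℝ)^(1/b) := by
              rw [Finset.sum_const, Finset.card_univ, Fintype.card_fin, nsmul_eq_mul]
          _ ≤ ∑ i : Fin N, ‖d i‖ ^ (1/b) := by
              refine Finset.sum_le_sum fun i _ => ?_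
              refine Real.rpow_le_rpow (by norm_num) ?_ (by positivity)
              rw [hddef]
              exact hcoord i
      calc (1/2:ℝ) * (N:ℝ)^b = ((N:ℝ) * (1/2:ℝ)^(1/b)) ^ b := by
            rw [Real.mul_rpow (by positivity) (by positivity),
              ← Real.rpow_mul (by norm_num), one_div_mul_cancel hb0.ne', Real.rpow_one]
            ring
        _ ≤ (∑ i : Fin N, ‖d i‖ ^ (1/b)) ^ b :=
            Real.rpow_le_rpow (by positivity) h1 hb0.le
    have hub : ∀ ε : Fin N → Bool, ‖u ε‖ ≤ A * θ^(b-a) * (N:ℝ)^a := by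
      intro ε
      have hw : seqMem b (S θ (sg ε)) := hmap θ hθ1 _ (hmemsg ε)
      have h1 : ‖u ε‖ = (∑ i : Fin N, ‖(S θ (sg ε)) (i:ℕ)‖ ^ (1/b)) ^ b := by
        rw [PiLp.norm_eq_sum hPpos, hPto, one_div_one_div, hudef]
        congr 1
        refine Finset.sum_congr rfl fun i _ => ?_
        rw [PiLp.toLp_apply, norm_mul, sg_norm, if_pos i.isLt, one_mul]
      have h2 : (∑ i : Fin N, ‖(S θ (sg ε)) (i:ℕ)‖ ^ (1/b)) ^ b ≤ seqNorm b (S θ (sg ε)) := by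
        have h := sum_rpow_le_seqNorm hb0 _ hw (Finset.range N)
        rwa [← Fin.sum_univ_eq_sum_range (fun k => ‖(S θ (sg ε)) k‖ ^ (1/b)) N] at h
      have h3 := hS1 θ hθ1 _ (hmemsg ε)
      rw [hnormsg ε] at h3
      rw [h1]; exact le_trans h2 h3
    have hsmul : ((2:ℂ)^N) • d = ∑ ε : Fin N → Bool, u ε := by
      ext i
      rw [PiLp.smul_apply, hsum_apply, smul_eq_mul]
      simp only [hudef]
      rw [hddef]
      exact (hkey i).symm
    have havg : (2:ℝ)^N * ‖d‖ ≤ (2:ℝ)^N * (A * θ^(b-a) * (N:ℝ)^a) := by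
      calc (2:ℝ)^N * ‖d‖ = ‖((2:ℂ)^N) • d‖ := by
            rw [norm_smul, norm_pow]
            norm_num
        _ = ‖∑ ε : Fin N → Bool, u ε‖ := by rw [hsmul]
        _ ≤ ∑ _ε : Fin N → Bool, ‖u _ε‖ := norm_sum_le _ _
        _ ≤ ∑ _ε : Fin N → Bool, (A * θ^(b-a) * (N:ℝ)^a) :=
            Finset.sum_le_sum fun ε _ => hub ε
        _ = (2:ℝ)^N * (A * θ^(b-a) * (N:ℝ)^a) := by
            rw [Finset.sum_const, Finset.card_univ, Fintype.card_fun, Fintype.card_bool,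
              Fintype.card_fin, nsmul_eq_mul]
            push_cast
            ring
    have hup : ‖d‖ ≤ A * θ^(b-a) * (N:ℝ)^a :=
      le_of_mul_le_mul_left havg (by positivity)
    exact le_trans hlow hup
  -- deduce a contradiction
  obtain ⟨N, hNgt⟩ := exists_nat_gt (max 1 ((2*A*θ^(b-a)) ^ (1/(b-a))))
  have hN1 : 1 ≤ N := by
    have : (1:ℝ) < N := lt_of_le_of_lt (le_max_left _ _) hNgt
    exact_mod_cast this.le
  have hN0 : (0:ℝ) < N := by positivity
  have hkey := hkeyN N hN1
  have hNa : (0:ℝ) < (N:ℝ) ^ a := Real.rpow_pos_of_pos hN0 _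
  have hsplit : (N:ℝ) ^ b = (N:ℝ) ^ a * (N:ℝ) ^ (b-a) := by
    rw [← Real.rpow_add hN0]; ring_nf
  have hlt : 2*A*θ^(b-a) < (N:ℝ) ^ (b-a) := by
    have h1 : (2*A*θ^(b-a)) ^ (1/(b-a)) < (N:ℝ) := lt_of_le_of_lt (le_max_right _ _) hNgt
    have h2 : ((2*A*θ^(b-a)) ^ (1/(b-a))) ^ (b-a) < (N:ℝ) ^ (b-a) :=
      Real.rpow_lt_rpow (Real.rpow_nonneg (by positivity) _) h1 hba
    rwa [← Real.rpow_mul (by positivity), one_div_mul_cancel hba.ne', Real.rpow_one] at h2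
  rw [hsplit] at hkey
  nlinarith
end
end

section
/- With ψ, ψ_θ, S_θ as above (so that ∫ψ_θ = 1 and ∫ x^α ψ_θ(x) dx = 0 for all multi-indices α ≠ 0), for all integers 0 ≤ a < b, there is a constant C depending only on d, a, b such that for all u ∈ C^b_b(ℝᵈ, ℂ) and θ ≥ 1: ‖u − S_θ u‖_{C^a} ≤ C θ^{−(b−a)} ‖u‖_{C^b}. -/
set_option synthInstance.maxHeartbeats 1000000
set_option maxHeartbeats 1000000

/- STATEMENT 14: For the smoothing operators `S_θ u = u ∗ ψ_θ` (with `ψ` an even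
Schwartz kernel of integral 1 and vanishing moments of positive order), for all
integers `0 ≤ a < b` there is a constant `C = C(d,a,b) > 0` such that
`‖u − S_θ u‖_{C^a} ≤ C θ^{−(b−a)} ‖u‖_{C^b}` for every `u ∈ C^b_b(ℝᵈ,ℂ)`
and `θ ≥ 1`. -/

open scoped BigOperators

open MeasureTheory Finset Set Metric

noncomputable section

/-- The rescaled kernel `ψ_θ(x) = θᵈ ψ(θ x)`. -/
def scaledKer (d : ℕ) (ψ : EuclideanSpace ℝ (Fin d) → ℝ) (θ : ℝ) :
    EuclideanSpace ℝ (Fin d) → ℝ :=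
  fun x => θ ^ d * ψ (θ • x)

/-- The smoothing operator `S_θ u = u ∗ ψ_θ`. -/
def smoothOp (d : ℕ) (ψ : EuclideanSpace ℝ (Fin d) → ℝ) (θ : ℝ)
    (u : EuclideanSpace ℝ (Fin d) → ℂ) : EuclideanSpace ℝ (Fin d) → ℂ :=
  fun x => ∫ y : EuclideanSpace ℝ (Fin d), scaledKer d ψ θ (x - y) • u y

/-- The `C^k` norm `max_{m ≤ k} sup_x ‖D^m u(x)‖`. -/
def cNorm (d k : ℕ) (u : EuclideanSpace ℝ (Fin d) → ℂ) : ℝ :=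
  ⨆ m : Fin (k + 1), ⨆ x : EuclideanSpace ℝ (Fin d), ‖iteratedFDeriv ℝ (m : ℕ) u x‖

section AuxLemmas

variable {d : ℕ}

lemma coord_abs_le_norm (z : EuclideanSpace ℝ (Fin d)) (i : Fin d) : |z i| ≤ ‖z‖ := by
  rw [EuclideanSpace.norm_eq]
  rw [show |z i| = Real.sqrt (|z i| ^ 2) by rw [Real.sqrt_sq_eq_abs, abs_abs]]
  apply Real.sqrt_le_sqrt
  rw [show |z i| ^ 2 = ‖z i‖ ^ 2 by rw [Real.norm_eq_abs]]
  exact Finset.single_le_sum (fun j _ => sq_nonneg ‖z j‖) (Finset.mem_univ i)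

lemma prod_coord_le_norm (z : EuclideanSpace ℝ (Fin d)) {k : ℕ} (f : Fin k → Fin d) :
    |∏ j, z (f j)| ≤ ‖z‖ ^ k := by
  rw [Finset.abs_prod]
  calc ∏ j, |z (f j)| ≤ ∏ _j : Fin k, ‖z‖ :=
        Finset.prod_le_prod (fun j _ => abs_nonneg _) (fun j _ => coord_abs_le_norm z (f j))
    _ = ‖z‖ ^ k := by simp [Finset.prod_const]

variable (ψ : SchwartzMap (EuclideanSpace ℝ (Fin d)) ℝ)

lemma cont_scaledKer (θ : ℝ) : Continuous (scaledKer d (fun y => ψ y) θ) := by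
  unfold scaledKer
  exact continuous_const.mul (ψ.continuous.comp (continuous_id.const_smul θ))

lemma abs_scaledKer {θ : ℝ} (hθ : 0 < θ) (z : EuclideanSpace ℝ (Fin d)) :
    |scaledKer d (fun y => ψ y) θ z| = θ ^ d * |ψ (θ • z)| := by
  unfold scaledKer
  rw [abs_mul, abs_pow, abs_of_pos hθ]

lemma integrable_pow_mul_sk {θ : ℝ} (hθ : 0 < θ) (p : ℕ) :
    Integrable (fun z : EuclideanSpace ℝ (Fin d) =>
      ‖z‖ ^ p * |scaledKer d (fun y => ψ y) θ z|) := by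
  have h0 : Integrable (fun y : EuclideanSpace ℝ (Fin d) => ‖y‖ ^ p * ‖ψ y‖) volume :=
    ψ.integrable_pow_mul volume p
  have h1 : Integrable (fun z : EuclideanSpace ℝ (Fin d) => ‖θ • z‖ ^ p * ‖ψ (θ • z)‖) volume :=
    h0.comp_smul (ne_of_gt hθ)
  have h2 := h1.const_mul ((θ ^ p)⁻¹ * θ ^ d)
  apply h2.congr
  filter_upwards with z
  rw [abs_scaledKer ψ hθ, norm_smul, Real.norm_eq_abs, abs_of_pos hθ, mul_pow, Real.norm_eq_abs]
  field_simp

lemma integral_pow_mul_sk {θ : ℝ} (hθ : 0 < θ) (p : ℕ) :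
    ∫ z : EuclideanSpace ℝ (Fin d), ‖z‖ ^ p * |scaledKer d (fun y => ψ y) θ z| =
      (θ ^ p)⁻¹ * ∫ y : EuclideanSpace ℝ (Fin d), ‖y‖ ^ p * ‖ψ y‖ := by
  have hcs := Measure.integral_comp_smul (volume : Measure (EuclideanSpace ℝ (Fin d)))
    (fun y : EuclideanSpace ℝ (Fin d) => ‖y‖ ^ p * ‖ψ y‖) θ
  rw [finrank_euclideanSpace_fin] at hcs
  have h1 : ∀ z : EuclideanSpace ℝ (Fin d),
      ‖z‖ ^ p * |scaledKer d (fun y => ψ y) θ z| =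
        ((θ ^ p)⁻¹ * θ ^ d) * (‖θ • z‖ ^ p * ‖ψ (θ • z)‖) := by
    intro z
    rw [abs_scaledKer ψ hθ, norm_smul, Real.norm_eq_abs, abs_of_pos hθ, mul_pow,
      Real.norm_eq_abs]
    field_simp
  calc ∫ z : EuclideanSpace ℝ (Fin d), ‖z‖ ^ p * |scaledKer d (fun y => ψ y) θ z|
      = ∫ z : EuclideanSpace ℝ (Fin d),
          ((θ ^ p)⁻¹ * θ ^ d) * (‖θ • z‖ ^ p * ‖ψ (θ • z)‖) := by
        congr 1; funext z; exact h1 z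
    _ = ((θ ^ p)⁻¹ * θ ^ d) * ∫ z : EuclideanSpace ℝ (Fin d), ‖θ • z‖ ^ p * ‖ψ (θ • z)‖ :=
        integral_const_mul _ _
    _ = ((θ ^ p)⁻¹ * θ ^ d) * (|(θ ^ d)⁻¹| • ∫ y : EuclideanSpace ℝ (Fin d), ‖y‖ ^ p * ‖ψ y‖) := by
        rw [hcs]
    _ = (θ ^ p)⁻¹ * ∫ y : EuclideanSpace ℝ (Fin d), ‖y‖ ^ p * ‖ψ y‖ := by
        rw [smul_eq_mul, abs_of_pos (by positivity : (0:ℝ) < (θ ^ d)⁻¹)]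
        field_simp

lemma integral_sk {θ : ℝ} (hθ : 0 < θ)
    (hmean : ∫ x : EuclideanSpace ℝ (Fin d), ψ x = 1) :
    ∫ z : EuclideanSpace ℝ (Fin d), scaledKer d (fun y => ψ y) θ z = 1 := by
  have hcs := Measure.integral_comp_smul (volume : Measure (EuclideanSpace ℝ (Fin d)))
    (fun y : EuclideanSpace ℝ (Fin d) => ψ y) θ
  rw [finrank_euclideanSpace_fin] at hcs
  unfold scaledKer
  rw [integral_const_mul, hcs, hmean, smul_eq_mul, mul_one,
    abs_of_pos (by positivity : (0:ℝ) < (θ ^ d)⁻¹)]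
  field_simp


lemma integrable_sk_smul {G : Type} [NormedAddCommGroup G] [NormedSpace ℝ G]
    {θ : ℝ} (hθ : 0 < θ) {h : EuclideanSpace ℝ (Fin d) → G} (hc : Continuous h)
    (A : ℝ) (p : ℕ) (hb : ∀ z, ‖h z‖ ≤ A * ‖z‖ ^ p) :
    Integrable (fun z => scaledKer d (fun y => ψ y) θ z • h z) := by
  apply Integrable.mono' ((integrable_pow_mul_sk ψ hθ p).const_mul A)
    (((cont_scaledKer ψ θ).smul hc).aestronglyMeasurable)
  filter_upwards with z
  rw [Pi.smul_apply', norm_smul, Real.norm_eq_abs]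
  calc |scaledKer d (fun y => ψ y) θ z| * ‖h z‖
      ≤ |scaledKer d (fun y => ψ y) θ z| * (A * ‖z‖ ^ p) :=
        mul_le_mul_of_nonneg_left (hb z) (abs_nonneg _)
    _ = A * (‖z‖ ^ p * |scaledKer d (fun y => ψ y) θ z|) := by ring

lemma integral_sk_mul_monomial
    (hmom : ∀ α : Fin d → ℕ, α ≠ 0 →
      ∫ x : EuclideanSpace ℝ (Fin d), (∏ i, (x i) ^ (α i)) * ψ x = 0)
    {θ : ℝ} (hθ : 0 < θ) (α : Fin d → ℕ) (hα : α ≠ 0) :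
    ∫ z : EuclideanSpace ℝ (Fin d),
      scaledKer d (fun y => ψ y) θ z * ∏ i, (z i) ^ (α i) = 0 := by
  set k := ∑ i, α i with hk
  have hq : ∀ z : EuclideanSpace ℝ (Fin d),
      (∏ i, ((θ • z) i) ^ (α i)) * ψ (θ • z) = θ ^ k * ((∏ i, (z i) ^ (α i)) * ψ (θ • z)) := by
    intro z
    have : ∀ i : Fin d, ((θ • z) i) ^ (α i) = θ ^ (α i) * (z i) ^ (α i) := by
      intro i
      have : (θ • z) i = θ * z i := rfl
      rw [this, mul_pow]
    rw [Finset.prod_congr rfl (fun i _ => this i), Finset.prod_mul_distrib,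
      Finset.prod_pow_eq_pow_sum]
    ring
  have hcs := Measure.integral_comp_smul (volume : Measure (EuclideanSpace ℝ (Fin d)))
    (fun y : EuclideanSpace ℝ (Fin d) => (∏ i, (y i) ^ (α i)) * ψ y) θ
  rw [finrank_euclideanSpace_fin, hmom α hα, smul_zero] at hcs
  have h2 : ∫ z : EuclideanSpace ℝ (Fin d), (∏ i, (z i) ^ (α i)) * ψ (θ • z) = 0 := by
    have h3 : ∫ z : EuclideanSpace ℝ (Fin d),
        θ ^ k * ((∏ i, (z i) ^ (α i)) * ψ (θ • z)) = 0 := by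
      rw [← integral_congr_ae (ae_of_all _ hq), hcs]
    rw [integral_const_mul] at h3
    rcases mul_eq_zero.mp h3 with h | h
    · exact absurd h (by positivity)
    · exact h
  calc ∫ z : EuclideanSpace ℝ (Fin d), scaledKer d (fun y => ψ y) θ z * ∏ i, (z i) ^ (α i)
      = ∫ z : EuclideanSpace ℝ (Fin d), θ ^ d * ((∏ i, (z i) ^ (α i)) * ψ (θ • z)) := by
        congr 1; funext z; unfold scaledKer; ring
    _ = θ ^ d * ∫ z : EuclideanSpace ℝ (Fin d), (∏ i, (z i) ^ (α i)) * ψ (θ • z) :=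
        integral_const_mul _ _
    _ = 0 := by rw [h2, mul_zero]

lemma euclid_repr (z : EuclideanSpace ℝ (Fin d)) :
    (fun _ : Unit => z) () = ∑ i, z i • EuclideanSpace.single i (1:ℝ) := by
  ext j
  have : (∑ i, z i • EuclideanSpace.single i (1:ℝ)) j
      = ∑ i, (z i • EuclideanSpace.single i (1:ℝ)) j := by
    rw [WithLp.ofLp_sum]; exact Finset.sum_apply j Finset.univ _
  rw [this]
  simp [EuclideanSpace.single_apply]

lemma integral_sk_smul_multilinear {G : Type} [NormedAddCommGroup G] [NormedSpace ℝ G]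
    [CompleteSpace G]
    (hmom : ∀ α : Fin d → ℕ, α ≠ 0 →
      ∫ x : EuclideanSpace ℝ (Fin d), (∏ i, (x i) ^ (α i)) * ψ x = 0)
    {θ : ℝ} (hθ : 0 < θ) {k : ℕ} (hk : k ≠ 0)
    (M : ContinuousMultilinearMap ℝ (fun _ : Fin k => EuclideanSpace ℝ (Fin d)) G) :
    ∫ z : EuclideanSpace ℝ (Fin d),
      scaledKer d (fun y => ψ y) θ z • M (fun _ => z) = 0 := by
  classical
  have hexp : ∀ z : EuclideanSpace ℝ (Fin d), M (fun _ => z) =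
      ∑ f : Fin k → Fin d, (∏ j, z (f j)) • M (fun j => EuclideanSpace.single (f j) (1:ℝ)) := by
    intro z
    have h1 : (fun _ : Fin k => z) =
        fun _ : Fin k => ∑ i, z i • EuclideanSpace.single i (1:ℝ) := by
      funext _; exact euclid_repr z
    rw [h1, M.map_sum, Fintype.sum_congr _ _ (fun f => M.map_smul_univ _ _)]
  have hcontc : ∀ f : Fin k → Fin d, Continuous (fun z : EuclideanSpace ℝ (Fin d) =>
      (∏ j, z (f j)) • M (fun j => EuclideanSpace.single (f j) (1:ℝ))) := by
    intro f
    apply Continuous.smul _ continuous_const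
    exact continuous_finset_prod _ (fun j _ => (EuclideanSpace.proj (f j)).continuous)
  have hint : ∀ f : Fin k → Fin d, Integrable (fun z : EuclideanSpace ℝ (Fin d) =>
      scaledKer d (fun y => ψ y) θ z •
        ((∏ j, z (f j)) • M (fun j => EuclideanSpace.single (f j) (1:ℝ)))) := by
    intro f
    apply integrable_sk_smul ψ hθ (hcontc f)
      ‖M (fun j => EuclideanSpace.single (f j) (1:ℝ))‖ k
    intro z
    rw [norm_smul, Real.norm_eq_abs, mul_comm]
    exact mul_le_mul_of_nonneg_left (prod_coord_le_norm z f) (norm_nonneg _)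
  have hfib : ∀ (f : Fin k → Fin d) (z : EuclideanSpace ℝ (Fin d)),
      ∏ j : Fin k, z (f j) =
        ∏ i : Fin d, (z i) ^ (Finset.univ.filter (fun j => f j = i)).card := by
    intro f z
    rw [← Finset.prod_fiberwise_of_maps_to (fun j _ => Finset.mem_univ (f j))
      (fun j => z (f j))]
    refine Finset.prod_congr rfl (fun i _ => ?_)
    rw [Finset.prod_congr rfl (fun j hj => by rw [(Finset.mem_filter.mp hj).2]),
      Finset.prod_const]
  have halpha : ∀ f : Fin k → Fin d,
      (fun i => (Finset.univ.filter (fun j => f j = i)).card) ≠ (0 : Fin d → ℕ) := by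
    intro f h0
    have hcard : (Finset.univ : Finset (Fin k)).card =
        ∑ i : Fin d, (Finset.univ.filter (fun j => f j = i)).card :=
      Finset.card_eq_sum_card_fiberwise (fun j _ => Finset.mem_univ (f j))
    apply hk
    have : ∀ i : Fin d, (Finset.univ.filter (fun j => f j = i)).card = 0 :=
      fun i => congrFun h0 i
    simpa [Finset.card_univ, this] using hcard
  calc ∫ z : EuclideanSpace ℝ (Fin d), scaledKer d (fun y => ψ y) θ z • M (fun _ => z)
      = ∫ z : EuclideanSpace ℝ (Fin d), ∑ f : Fin k → Fin d,
          scaledKer d (fun y => ψ y) θ z •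
            ((∏ j, z (f j)) • M (fun j => EuclideanSpace.single (f j) (1:ℝ))) := by
        congr 1; funext z; rw [hexp z, Finset.smul_sum]
    _ = ∑ f : Fin k → Fin d, ∫ z : EuclideanSpace ℝ (Fin d),
          scaledKer d (fun y => ψ y) θ z •
            ((∏ j, z (f j)) • M (fun j => EuclideanSpace.single (f j) (1:ℝ))) :=
        integral_finset_sum _ (fun f _ => hint f)
    _ = 0 := by
        refine Finset.sum_eq_zero (fun f _ => ?_)
        have e1 : ∀ z : EuclideanSpace ℝ (Fin d),
            scaledKer d (fun y => ψ y) θ z •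
              ((∏ j, z (f j)) • M (fun j => EuclideanSpace.single (f j) (1:ℝ)))
            = (scaledKer d (fun y => ψ y) θ z *
                ∏ i : Fin d, (z i) ^ (Finset.univ.filter (fun j => f j = i)).card) •
                M (fun j => EuclideanSpace.single (f j) (1:ℝ)) := by
          intro z; rw [smul_smul, hfib f z]
        rw [integral_congr_ae (ae_of_all _ e1), integral_smul_const,
          integral_sk_mul_monomial ψ hmom hθ _ (halpha f), zero_smul]

lemma my_iteratedFDeriv_shift {G : Type} [NormedAddCommGroup G] [NormedSpace ℝ G]
    (v : EuclideanSpace ℝ (Fin d) → G) {N : ℕ} (hv : ContDiff ℝ (N : ℕ∞) v)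
    (x : EuclideanSpace ℝ (Fin d)) :
    ∀ k, k ≤ N → ∀ y, iteratedFDeriv ℝ k (fun w => v (x + w)) y = iteratedFDeriv ℝ k v (x + y) := by
  intro k
  induction k with
  | zero =>
    intro _ y
    ext m
    simp [iteratedFDeriv_zero_apply]
  | succ k IH =>
    intro hk y
    have hk' : k ≤ N := Nat.le_of_succ_le hk
    have hdiff : DifferentiableAt ℝ (iteratedFDeriv ℝ k v) (x + y) := by
      have := hv.differentiable_iteratedFDeriv (n := (N : ℕ∞)) (m := k)
        (by exact_mod_cast Nat.lt_of_succ_le hk)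
      exact this (x + y)
    have hshift : HasFDerivAt (fun w => iteratedFDeriv ℝ k v (x + w))
        (fderiv ℝ (iteratedFDeriv ℝ k v) (x + y)) y := by
      have h2 : HasFDerivAt (fun w : EuclideanSpace ℝ (Fin d) => x + w)
          (ContinuousLinearMap.id ℝ (EuclideanSpace ℝ (Fin d))) y := by
        simpa using (hasFDerivAt_id y).const_add x
      have := hdiff.hasFDerivAt.comp y h2; rwa [ContinuousLinearMap.comp_id] at this
    ext m
    rw [iteratedFDeriv_succ_apply_left, iteratedFDeriv_succ_apply_left]
    have hfun : iteratedFDeriv ℝ k (fun w => v (x + w)) =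
        fun w => iteratedFDeriv ℝ k v (x + w) := funext (fun w => IH hk' w)
    rw [hfun, hshift.fderiv]

lemma my_iteratedDerivWithin_eq {G : Type} [NormedAddCommGroup G] [NormedSpace ℝ G]
    (g : ℝ → G) {N : ℕ} (hg : ContDiff ℝ (N : ℕ∞) g) {s : Set ℝ} (hs : UniqueDiffOn ℝ s)
    {t : ℝ} (ht : t ∈ s) {k : ℕ} (hk : k ≤ N) :
    iteratedDerivWithin k g s t = iteratedDeriv k g t := by
  rw [iteratedDerivWithin_eq_iteratedFDerivWithin, iteratedDeriv_eq_iteratedFDeriv]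
  congr 1
  have h := contDiff_iff_ftaylorSeries.mp hg
  have h2 := (hasFTaylorSeriesUpToOn_univ_iff.mpr h).mono (Set.subset_univ s)
  exact (h2.eq_iteratedFDerivWithin_of_uniqueDiffOn (by exact_mod_cast hk) hs ht).symm

lemma my_taylor_bound {G : Type} [NormedAddCommGroup G] [NormedSpace ℝ G]
    (v : EuclideanSpace ℝ (Fin d) → G) {n : ℕ} (hn : 1 ≤ n) (hv : ContDiff ℝ (n : ℕ∞) v)
    (K : ℝ) (hK : ∀ y, ‖iteratedFDeriv ℝ n v y‖ ≤ K) (x z : EuclideanSpace ℝ (Fin d)) :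
    ‖v (x + z) - ∑ k ∈ Finset.range n,
        ((k.factorial : ℝ))⁻¹ • iteratedFDeriv ℝ k v x (fun _ => z)‖ ≤ K * ‖z‖ ^ n := by
  classical
  set L : ℝ →L[ℝ] EuclideanSpace ℝ (Fin d) := (ContinuousLinearMap.id ℝ ℝ).smulRight z with hL
  have hLt : ∀ t : ℝ, L t = t • z := by intro t; simp [hL]
  set v₁ : EuclideanSpace ℝ (Fin d) → G := fun w => v (x + w) with hv₁def
  have hv₁ : ContDiff ℝ (n : ℕ∞) v₁ := hv.comp (contDiff_const.add contDiff_id)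
  set g : ℝ → G := v₁ ∘ L with hgdef
  have hg : ContDiff ℝ (n : ℕ∞) g := hv₁.comp L.contDiff
  have hco : ∀ k, k ≤ n → ∀ t : ℝ, iteratedFDeriv ℝ k g t =
      (iteratedFDeriv ℝ k v (x + t • z)).compContinuousLinearMap (fun _ => L) := by
    intro k hk t
    have h1 := L.iteratedFDeriv_comp_right hv₁ t (by exact_mod_cast hk)
    rw [hgdef, h1]
    congr 1
    rw [my_iteratedFDeriv_shift v hv x k hk (L t), hLt]
  have hderiv : ∀ k, k ≤ n → ∀ t : ℝ, iteratedDeriv k g t =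
      iteratedFDeriv ℝ k v (x + t • z) (fun _ => z) := by
    intro k hk t
    rw [iteratedDeriv_eq_iteratedFDeriv, hco k hk t]
    simp [hLt]
  set n' := n - 1 with hn'
  have hn1 : n' + 1 = n := Nat.succ_pred_eq_of_pos hn
  have hud : UniqueDiffOn ℝ (Icc (0:ℝ) 1) := uniqueDiffOn_Icc zero_lt_one
  have K0 : 0 ≤ K := le_trans (norm_nonneg _) (hK x)
  have hB := taylor_mean_remainder_bound (f := g) (a := 0) (b := 1) (x := 1) (n := n')
    zero_le_one
    (by
      have hcast : ((n' : WithTop ℕ∞) + 1) = ((n : ℕ∞) : WithTop ℕ∞) := by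
        exact_mod_cast congrArg (Nat.cast : ℕ → WithTop ℕ∞) hn1
      rw [hcast]; exact hg.contDiffOn)
    (Set.right_mem_Icc.mpr zero_le_one)
    (C := K * ‖z‖ ^ n)
    (by
      intro y hy
      rw [show n' + 1 = n from hn1,
        my_iteratedDerivWithin_eq g hg hud hy (le_refl n), hderiv n (le_refl n) y]
      calc ‖iteratedFDeriv ℝ n v (x + y • z) (fun _ => z)‖
          ≤ ‖iteratedFDeriv ℝ n v (x + y • z)‖ * ∏ _i : Fin n, ‖z‖ :=
            ContinuousMultilinearMap.le_opNorm _ _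
        _ ≤ K * ‖z‖ ^ n := by
            rw [Finset.prod_const]
            simp only [Finset.card_univ, Fintype.card_fin]
            exact mul_le_mul_of_nonneg_right (hK _) (by positivity))
  have hg1 : g 1 = v (x + z) := by simp [hgdef, hv₁def, hLt]
  have hT : taylorWithinEval g n' (Icc (0:ℝ) 1) 0 1 =
      ∑ k ∈ Finset.range n, ((k.factorial : ℝ))⁻¹ • iteratedFDeriv ℝ k v x (fun _ => z) := by
    rw [taylor_within_apply, hn1]
    refine Finset.sum_congr rfl (fun k hk => ?_)
    have hkn : k ≤ n := by have := Finset.mem_range.mp hk; omega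
    rw [my_iteratedDerivWithin_eq g hg hud (Set.left_mem_Icc.mpr zero_le_one) hkn,
      hderiv k hkn 0]
    simp
  rw [hg1, hT] at hB
  calc ‖v (x + z) - ∑ k ∈ Finset.range n,
        ((k.factorial : ℝ))⁻¹ • iteratedFDeriv ℝ k v x (fun _ => z)‖
      ≤ K * ‖z‖ ^ n * (1 - 0) ^ (n' + 1) / n'.factorial := hB
    _ ≤ K * ‖z‖ ^ n := by
        rw [sub_zero, one_pow, mul_one]
        apply div_le_self (by positivity)
        exact_mod_cast Nat.one_le_iff_ne_zero.mpr (Nat.factorial_ne_zero n')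

lemma key_zero {G : Type} [NormedAddCommGroup G] [NormedSpace ℝ G] [CompleteSpace G]
    (hmean : ∫ x : EuclideanSpace ℝ (Fin d), ψ x = 1)
    (hmom : ∀ α : Fin d → ℕ, α ≠ 0 →
      ∫ x : EuclideanSpace ℝ (Fin d), (∏ i, (x i) ^ (α i)) * ψ x = 0)
    {θ : ℝ} (hθ1 : 1 ≤ θ) {n : ℕ} (hn : 1 ≤ n)
    (v : EuclideanSpace ℝ (Fin d) → G) (hv : ContDiff ℝ (n : ℕ∞) v)
    (K : ℝ) (hK : ∀ k, k ≤ n → ∀ y, ‖iteratedFDeriv ℝ k v y‖ ≤ K)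
    (C₀ : ℝ) (hC₀ : ∀ p, 1 ≤ p → p ≤ n →
      (∫ y : EuclideanSpace ℝ (Fin d), ‖y‖ ^ p * ‖ψ y‖) ≤ C₀)
    (x : EuclideanSpace ℝ (Fin d)) :
    ‖v x - ∫ z : EuclideanSpace ℝ (Fin d), scaledKer d (fun y => ψ y) θ z • v (x - z)‖ ≤
      C₀ * (θ ^ n)⁻¹ * K := by
  classical
  have hθ : 0 < θ := lt_of_lt_of_le one_pos hθ1
  have hbv : ∀ y, ‖v y‖ ≤ K := by
    intro y
    have := hK 0 (Nat.zero_le n) y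
    rwa [norm_iteratedFDeriv_zero] at this
  have K0 : 0 ≤ K := le_trans (norm_nonneg _) (hbv x)
  set sk := scaledKer d (fun y => ψ y) θ with hsk
  -- integrability facts
  have I1 : Integrable (fun z => sk z • v (x - z)) := by
    apply integrable_sk_smul ψ hθ (hv.continuous.comp (continuous_const.sub continuous_id)) K 0
    intro z; simpa using hbv (x - z)
  have Ic : Integrable (fun z => sk z • v x) := by
    apply integrable_sk_smul ψ hθ continuous_const K 0
    intro z; simpa using hbv x
  -- Taylor polynomial terms
  set T : EuclideanSpace ℝ (Fin d) → G := fun z => ∑ k ∈ Finset.range n,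
    ((k.factorial : ℝ))⁻¹ • iteratedFDeriv ℝ k v x (fun _ => -z) with hT
  have hTterm_cont : ∀ k, Continuous (fun z : EuclideanSpace ℝ (Fin d) =>
      ((k.factorial : ℝ))⁻¹ • iteratedFDeriv ℝ k v x (fun _ => -z)) := by
    intro k
    apply Continuous.const_smul
    exact (iteratedFDeriv ℝ k v x).coe_continuous.comp
      (continuous_pi (fun _ => continuous_neg))
  have hTterm_bd : ∀ k, ∀ z : EuclideanSpace ℝ (Fin d),
      ‖((k.factorial : ℝ))⁻¹ • iteratedFDeriv ℝ k v x (fun _ => -z)‖ ≤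
        (((k.factorial : ℝ))⁻¹ * ‖iteratedFDeriv ℝ k v x‖) * ‖z‖ ^ k := by
    intro k z
    rw [norm_smul, norm_inv, Real.norm_natCast, mul_assoc]
    apply mul_le_mul_of_nonneg_left _ (by positivity)
    calc ‖iteratedFDeriv ℝ k v x (fun _ => -z)‖
        ≤ ‖iteratedFDeriv ℝ k v x‖ * ∏ _i : Fin k, ‖-z‖ :=
          ContinuousMultilinearMap.le_opNorm _ _
      _ = ‖iteratedFDeriv ℝ k v x‖ * ‖z‖ ^ k := by
          rw [Finset.prod_const, norm_neg]
          simp [Finset.card_univ]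
  have ITterm : ∀ k, Integrable (fun z => sk z •
      (((k.factorial : ℝ))⁻¹ • iteratedFDeriv ℝ k v x (fun _ => -z))) := by
    intro k
    exact integrable_sk_smul ψ hθ (hTterm_cont k) _ k (hTterm_bd k)
  have IT : Integrable (fun z => sk z • T z) := by
    have : (fun z => sk z • T z) = fun z => ∑ k ∈ Finset.range n,
        sk z • (((k.factorial : ℝ))⁻¹ • iteratedFDeriv ℝ k v x (fun _ => -z)) := by
      funext z; rw [hT]; exact Finset.smul_sum
    rw [this]
    exact integrable_finset_sum _ (fun k _ => ITterm k)
  -- step 1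
  have step1 : v x - (∫ z, sk z • v (x - z)) = ∫ z, sk z • (v x - v (x - z)) := by
    have : (fun z => sk z • (v x - v (x - z))) =
        fun z => sk z • v x - sk z • v (x - z) := by
      funext z; rw [smul_sub]
    rw [this, integral_sub Ic I1, integral_smul_const, integral_sk ψ hθ hmean, one_smul]
  -- step 2 : splitting
  have ITv : Integrable (fun z => sk z • (T z - v (x - z))) := by
    refine (IT.sub I1).congr (Filter.Eventually.of_forall (fun z => ?_))
    simp [smul_sub]
  have IvT : Integrable (fun z => sk z • (v x - T z)) := by
    refine (Ic.sub IT).congr (Filter.Eventually.of_forall (fun z => ?_))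
    simp [smul_sub]
  have split : (∫ z, sk z • (v x - v (x - z))) =
      (∫ z, sk z • (T z - v (x - z))) + ∫ z, sk z • (v x - T z) := by
    have e : ∀ z, sk z • (v x - v (x - z)) =
        sk z • (T z - v (x - z)) + sk z • (v x - T z) := by
      intro z; rw [← smul_add]; congr 1; abel
    rw [integral_congr_ae (Filter.Eventually.of_forall e), integral_add ITv IvT]
  -- the moment terms vanish
  have hJ : ∀ k, 1 ≤ k →
      (∫ z, sk z • (iteratedFDeriv ℝ k v x (fun _ => -z))) = 0 := by
    intro k hk
    set M' := (iteratedFDeriv ℝ k v x).compContinuousLinearMap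
      (fun _ => -(ContinuousLinearMap.id ℝ (EuclideanSpace ℝ (Fin d)))) with hM'
    have happ : ∀ z : EuclideanSpace ℝ (Fin d),
        iteratedFDeriv ℝ k v x (fun _ => -z) = M' (fun _ => z) := by
      intro z
      rw [hM']
      simp
    calc (∫ z, sk z • (iteratedFDeriv ℝ k v x (fun _ => -z)))
        = ∫ z, sk z • M' (fun _ => z) :=
          integral_congr_ae (Filter.Eventually.of_forall
            (fun z => congrArg (fun w => sk z • w) (happ z)))
      _ = 0 := integral_sk_smul_multilinear ψ hmom hθ
          (Nat.one_le_iff_ne_zero.mp hk) M'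
  have hvT : ∀ z, v x - T z =
      -∑ k ∈ Finset.Ico 1 n, ((k.factorial : ℝ))⁻¹ • iteratedFDeriv ℝ k v x (fun _ => -z) := by
    intro z
    have hsplit : T z = ((Nat.factorial 0 : ℝ))⁻¹ • iteratedFDeriv ℝ 0 v x (fun _ => -z) +
        ∑ k ∈ Finset.Ico 1 n, ((k.factorial : ℝ))⁻¹ • iteratedFDeriv ℝ k v x (fun _ => -z) := by
      simp only [hT]
      rw [Finset.range_eq_Ico, Finset.sum_eq_sum_Ico_succ_bot (by omega : 0 < n)]
    rw [hsplit]
    simp only [Nat.factorial_zero, Nat.cast_one, inv_one, one_smul, iteratedFDeriv_zero_apply]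
    abel
  have ITerm2 : ∀ k, Integrable (fun z =>
      ((k.factorial : ℝ))⁻¹ • (sk z • iteratedFDeriv ℝ k v x (fun _ => -z))) := by
    intro k
    refine (ITterm k).congr (Filter.Eventually.of_forall (fun z => ?_))
    exact smul_comm _ _ _
  have vanish : (∫ z, sk z • (v x - T z)) = 0 := by
    have e2 : ∀ z, sk z • (v x - T z) =
        -∑ k ∈ Finset.Ico 1 n,
          ((k.factorial : ℝ))⁻¹ • (sk z • iteratedFDeriv ℝ k v x (fun _ => -z)) := by
      intro z
      rw [hvT z, smul_neg, Finset.smul_sum]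
      congr 1
      exact Finset.sum_congr rfl (fun k _ => smul_comm _ _ _)
    rw [integral_congr_ae (Filter.Eventually.of_forall e2), integral_neg,
      integral_finset_sum _ (fun k _ => ITerm2 k)]
    rw [Finset.sum_congr rfl (fun k hk => by
      rw [integral_smul, hJ k (Finset.mem_Ico.mp hk).1, smul_zero])]
    simp
  -- final estimate
  have main_eq : v x - (∫ z, sk z • v (x - z)) = ∫ z, sk z • (T z - v (x - z)) := by
    rw [step1, split, vanish, add_zero]
  rw [main_eq]
  have hpt : ∀ z : EuclideanSpace ℝ (Fin d),
      ‖sk z • (T z - v (x - z))‖ ≤ K * (‖z‖ ^ n * |sk z|) := by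
    intro z
    rw [norm_smul, Real.norm_eq_abs]
    have htay := my_taylor_bound v hn hv K (hK n le_rfl) x (-z)
    have hb : ‖T z - v (x - z)‖ ≤ K * ‖z‖ ^ n := by
      rw [norm_sub_rev, show x - z = x + -z from sub_eq_add_neg x z]
      simpa [norm_neg] using htay
    calc |sk z| * ‖T z - v (x - z)‖ ≤ |sk z| * (K * ‖z‖ ^ n) :=
          mul_le_mul_of_nonneg_left hb (abs_nonneg _)
      _ = K * (‖z‖ ^ n * |sk z|) := by ring
  calc ‖∫ z, sk z • (T z - v (x - z))‖
      ≤ ∫ z, K * (‖z‖ ^ n * |sk z|) :=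
        norm_integral_le_of_norm_le ((integrable_pow_mul_sk ψ hθ n).const_mul K)
          (Filter.Eventually.of_forall hpt)
    _ = K * ((θ ^ n)⁻¹ * ∫ y : EuclideanSpace ℝ (Fin d), ‖y‖ ^ n * ‖ψ y‖) := by
        rw [integral_const_mul, hsk, integral_pow_mul_sk ψ hθ n]
    _ ≤ K * ((θ ^ n)⁻¹ * C₀) := by
        have h := hC₀ n hn le_rfl
        have hinv : (0:ℝ) ≤ (θ ^ n)⁻¹ := by positivity
        exact mul_le_mul_of_nonneg_left (mul_le_mul_of_nonneg_left h hinv) K0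
    _ = C₀ * (θ ^ n)⁻¹ * K := by ring

lemma hasFDerivAt_smoothed {G : Type} [NormedAddCommGroup G] [NormedSpace ℝ G] [CompleteSpace G]
    {θ : ℝ} (hθ : 0 < θ) (w : EuclideanSpace ℝ (Fin d) → G)
    (hw1 : Differentiable ℝ w) (hwc : Continuous (fderiv ℝ w)) (K : ℝ)
    (h0 : ∀ y, ‖w y‖ ≤ K) (h1 : ∀ y, ‖fderiv ℝ w y‖ ≤ K)
    (x₀ : EuclideanSpace ℝ (Fin d)) :
    HasFDerivAt (fun x => ∫ z, scaledKer d (fun y => ψ y) θ z • w (x - z))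
      (∫ z, scaledKer d (fun y => ψ y) θ z • fderiv ℝ w (x₀ - z)) x₀ := by
  have K0 : 0 ≤ K := le_trans (norm_nonneg _) (h0 x₀)
  set sk := scaledKer d (fun y => ψ y) θ with hsk
  have hbound_int : Integrable (fun z : EuclideanSpace ℝ (Fin d) => |sk z| * K) := by
    have h := (integrable_pow_mul_sk ψ hθ 0).mul_const K
    refine h.congr (Filter.Eventually.of_forall (fun z => ?_))
    simp [hsk]
  apply hasFDerivAt_integral_of_dominated_of_fderiv_le
    (F := fun x z => sk z • w (x - z))
    (F' := fun x z => sk z • fderiv ℝ w (x - z))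
    (bound := fun z => |sk z| * K) (s := Set.univ) Filter.univ_mem
  · filter_upwards with x
    exact (((cont_scaledKer ψ θ).smul
      (hw1.continuous.comp (continuous_const.sub continuous_id)))).aestronglyMeasurable
  · apply integrable_sk_smul ψ hθ
      (hw1.continuous.comp (continuous_const.sub continuous_id)) K 0
    intro z; simpa using h0 (x₀ - z)
  · exact ((cont_scaledKer ψ θ).smul
      (hwc.comp (continuous_const.sub continuous_id))).aestronglyMeasurable
  · filter_upwards with z
    intro x _
    have hns := norm_smul (sk z) (fderiv ℝ w (x - z))
    rw [hns, Real.norm_eq_abs]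
    exact mul_le_mul_of_nonneg_left (h1 (x - z)) (abs_nonneg _)
  · exact hbound_int
  · filter_upwards with z
    intro x _
    have h2 : HasFDerivAt (fun x : EuclideanSpace ℝ (Fin d) => x - z)
        (ContinuousLinearMap.id ℝ (EuclideanSpace ℝ (Fin d))) x := by
      simpa using (hasFDerivAt_id x).sub_const z
    have h3 : HasFDerivAt (fun x => w (x - z)) (fderiv ℝ w (x - z)) x := by
      have := (hw1 (x - z)).hasFDerivAt.comp x h2; rwa [ContinuousLinearMap.comp_id] at this
    exact h3.const_smul (sk z)

lemma key (hmean : ∫ x : EuclideanSpace ℝ (Fin d), ψ x = 1)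
    (hmom : ∀ α : Fin d → ℕ, α ≠ 0 →
      ∫ x : EuclideanSpace ℝ (Fin d), (∏ i, (x i) ^ (α i)) * ψ x = 0) :
    ∀ (m : ℕ) {G : Type} [NormedAddCommGroup G] [NormedSpace ℝ G] [CompleteSpace G]
      (b' : ℕ) (w : EuclideanSpace ℝ (Fin d) → G), ContDiff ℝ (b' : ℕ∞) w → m < b' →
      ∀ (K C₀ : ℝ), (∀ k, k ≤ b' → ∀ y, ‖iteratedFDeriv ℝ k w y‖ ≤ K) →
      (∀ p, 1 ≤ p → p ≤ b' → (∫ y : EuclideanSpace ℝ (Fin d), ‖y‖ ^ p * ‖ψ y‖) ≤ C₀) →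
      ∀ (θ : ℝ), 1 ≤ θ → ∀ x,
      ‖iteratedFDeriv ℝ m
          (fun y => w y - ∫ z, scaledKer d (fun t => ψ t) θ z • w (y - z)) x‖ ≤
        C₀ * (θ ^ (b' - m))⁻¹ * K := by
  intro m
  induction m with
  | zero =>
    intro G _ _ _ b' w hw hm K C₀ hK hC₀ θ hθ x
    rw [norm_iteratedFDeriv_zero]
    simpa using key_zero ψ hmean hmom hθ (by omega : 1 ≤ b') w hw K hK C₀ hC₀ x
  | succ m IH =>
    intro G _ _ _ b' w hw hm K C₀ hK hC₀ θ hθ x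
    have hθ0 : 0 < θ := lt_of_lt_of_le one_pos hθ
    have hb1 : 1 ≤ b' := by omega
    have hwd : Differentiable ℝ w := hw.differentiable (by exact_mod_cast (show b' ≠ 0 by omega))
    have hw' : ContDiff ℝ ((b' - 1 : ℕ) : ℕ∞) (fderiv ℝ w) :=
      hw.fderiv_right (by exact_mod_cast (Nat.sub_add_cancel hb1).le)
    have hwc : Continuous (fderiv ℝ w) := hw'.continuous
    have h0 : ∀ y, ‖w y‖ ≤ K := by
      intro y
      have := hK 0 (Nat.zero_le _) y
      rwa [norm_iteratedFDeriv_zero] at this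
    have h1 : ∀ y, ‖fderiv ℝ w y‖ ≤ K := by
      intro y
      have h2 : ‖iteratedFDeriv ℝ 0 (fderiv ℝ w) y‖ = ‖iteratedFDeriv ℝ (0 + 1) w y‖ :=
        norm_iteratedFDeriv_fderiv
      rw [norm_iteratedFDeriv_zero] at h2
      rw [h2]
      exact hK 1 (by omega) y
    have hS := fun y => hasFDerivAt_smoothed ψ hθ0 w hwd hwc K h0 h1 y
    have heq : (fderiv ℝ (fun y => w y - ∫ z, scaledKer d (fun t => ψ t) θ z • w (y - z))) =
        fun y => fderiv ℝ w y - ∫ z, scaledKer d (fun t => ψ t) θ z • fderiv ℝ w (y - z) := by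
      funext y
      rw [fderiv_fun_sub (hwd y) (hS y).differentiableAt, (hS y).fderiv]
    rw [← norm_iteratedFDeriv_fderiv, heq]
    have hres := IH (b' - 1) (fderiv ℝ w) hw' (by omega) K C₀
      (fun k hk y => by
        rw [norm_iteratedFDeriv_fderiv]
        exact hK (k + 1) (by omega) y)
      (fun p h1p hpb => hC₀ p h1p (by omega)) θ hθ x
    have harith : b' - 1 - m = b' - (m + 1) := by omega
    rw [harith] at hres
    exact hres

theorem smoothing_Ck_remainder_estimate
    (d : ℕ) (hd : 0 < d) (ψ : SchwartzMap (EuclideanSpace ℝ (Fin d)) ℝ)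
    (heven : ∀ x, ψ (-x) = ψ x)
    -- `∫ ψ = 1`
    (hmean : ∫ x : EuclideanSpace ℝ (Fin d), ψ x = 1)
    -- all moments of positive order vanish: `∫ x^α ψ(x) dx = 0` for `α ≠ 0`
    (hmom : ∀ α : Fin d → ℕ, α ≠ 0 →
      ∫ x : EuclideanSpace ℝ (Fin d), (∏ i, (x i) ^ (α i)) * ψ x = 0)
    (a b : ℕ) (hab : a < b) :
    ∃ C : ℝ, 0 < C ∧ ∀ u : EuclideanSpace ℝ (Fin d) → ℂ,
      ContDiff ℝ (b : ℕ∞) u →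
      (∀ m : ℕ, m ≤ b → ∃ K, ∀ x, ‖iteratedFDeriv ℝ m u x‖ ≤ K) →
      ∀ θ : ℝ, 1 ≤ θ →
        cNorm d a (fun x => u x - smoothOp d (fun y => ψ y) θ u x) ≤
          C * θ ^ (-((b : ℝ) - a)) * cNorm d b u := by
  classical
  set C : ℝ := (∑ p ∈ Finset.Icc 1 b,
    ∫ y : EuclideanSpace ℝ (Fin d), ‖y‖ ^ p * ‖ψ y‖) + 1 with hC
  have hint_nonneg : ∀ p : ℕ, 0 ≤ ∫ y : EuclideanSpace ℝ (Fin d), ‖y‖ ^ p * ‖ψ y‖ := by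
    intro p
    apply integral_nonneg
    intro y
    positivity
  have hCpos : 0 < C := by
    rw [hC]
    have : 0 ≤ ∑ p ∈ Finset.Icc 1 b, ∫ y : EuclideanSpace ℝ (Fin d), ‖y‖ ^ p * ‖ψ y‖ :=
      Finset.sum_nonneg (fun p _ => hint_nonneg p)
    linarith
  have hC₀ : ∀ p, 1 ≤ p → p ≤ b →
      (∫ y : EuclideanSpace ℝ (Fin d), ‖y‖ ^ p * ‖ψ y‖) ≤ C := by
    intro p h1 h2
    rw [hC]
    have hle : (∫ y : EuclideanSpace ℝ (Fin d), ‖y‖ ^ p * ‖ψ y‖) ≤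
        ∑ q ∈ Finset.Icc 1 b, ∫ y : EuclideanSpace ℝ (Fin d), ‖y‖ ^ q * ‖ψ y‖ :=
      Finset.single_le_sum (fun q _ => hint_nonneg q) (Finset.mem_Icc.mpr ⟨h1, h2⟩)
    linarith
  refine ⟨C, hCpos, ?_⟩
  intro u hu hKs θ hθ
  have hθ0 : 0 < θ := lt_of_lt_of_le one_pos hθ
  set K : ℝ := cNorm d b u with hKdef
  have hK : ∀ k, k ≤ b → ∀ x, ‖iteratedFDeriv ℝ k u x‖ ≤ K := by
    intro k hk x
    have hbdd : BddAbove (Set.range fun x => ‖iteratedFDeriv ℝ k u x‖) := by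
      obtain ⟨K', hK'⟩ := hKs k hk
      exact ⟨K', by rintro _ ⟨y, rfl⟩; exact hK' y⟩
    have h1 : ‖iteratedFDeriv ℝ k u x‖ ≤ ⨆ y, ‖iteratedFDeriv ℝ k u y‖ := le_ciSup hbdd x
    have h2 : (⨆ y, ‖iteratedFDeriv ℝ k u y‖) ≤ K := by
      rw [hKdef, cNorm]
      have hfin : BddAbove (Set.range fun m : Fin (b + 1) =>
          ⨆ y, ‖iteratedFDeriv ℝ (m : ℕ) u y‖) :=
        Set.Finite.bddAbove (Set.finite_range _)
      exact le_ciSup hfin (⟨k, by omega⟩ : Fin (b + 1))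
    exact le_trans h1 h2
  have hK0 : 0 ≤ K := by
    rw [hKdef, cNorm]
    exact Real.iSup_nonneg (fun m => Real.iSup_nonneg (fun x => norm_nonneg _))
  -- rewrite convolution
  have hconv : (fun x => u x - smoothOp d (fun y => ψ y) θ u x) =
      fun x => u x - ∫ z, scaledKer d (fun t => ψ t) θ z • u (x - z) := by
    funext x
    congr 1
    unfold smoothOp
    calc ∫ y : EuclideanSpace ℝ (Fin d), scaledKer d (fun t => ψ t) θ (x - y) • u y
        = ∫ y : EuclideanSpace ℝ (Fin d),
            scaledKer d (fun t => ψ t) θ (x - y) • u (x - (x - y)) := by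
          congr 1; funext y; rw [sub_sub_cancel]
      _ = ∫ z : EuclideanSpace ℝ (Fin d), scaledKer d (fun t => ψ t) θ z • u (x - z) := by
          exact integral_sub_left_eq_self
            (fun z => scaledKer d (fun t => ψ t) θ z • u (x - z)) volume x
  rw [hconv]
  -- bound the sup
  have hRHS0 : 0 ≤ C * θ ^ (-((b : ℝ) - a)) * K := by positivity
  apply Real.iSup_le _ hRHS0
  intro m
  apply Real.iSup_le _ hRHS0
  intro x
  have hmb : (m : ℕ) < b := by
    have := m.isLt
    omega
  have hkey := key ψ hmean hmom (m : ℕ) b u hu hmb K C hK hC₀ θ hθ x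
  refine le_trans hkey ?_
  have hexp : ((θ : ℝ) ^ ((b : ℕ) - (m : ℕ)))⁻¹ ≤ θ ^ (-((b : ℝ) - a)) := by
    have h1 : ((θ : ℝ) ^ ((b : ℕ) - (m : ℕ)))⁻¹ = θ ^ (-(((b - (m : ℕ) : ℕ)) : ℝ)) := by
      rw [Real.rpow_neg (le_of_lt hθ0), Real.rpow_natCast]
    rw [h1]
    apply Real.rpow_le_rpow_of_exponent_le hθ
    have hm_le_a : (m : ℕ) ≤ a := by have := m.isLt; omega
    have : ((b - (m : ℕ) : ℕ) : ℝ) = (b : ℝ) - (m : ℕ) := by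
      rw [Nat.cast_sub (le_of_lt hmb)]
    rw [this]
    have : ((m : ℕ) : ℝ) ≤ (a : ℝ) := by exact_mod_cast hm_le_a
    linarith
  calc C * ((θ : ℝ) ^ ((b : ℕ) - (m : ℕ)))⁻¹ * K ≤ C * θ ^ (-((b : ℝ) - a)) * K := by
        apply mul_le_mul_of_nonneg_right _ hK0
        exact mul_le_mul_of_nonneg_left hexp (le_of_lt hCpos)

end AuxLemmas
end
end
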